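/- For every positive integer m, the real number T(m) = Σ_{j=0}^{3m−1} (−1)^j · 2^(−j/3) satisfies T(m)^3 = (2^m + (−1)^(m+1))^3 · (2^(1/3) − 1) / (3 · 2^(3m−1)). (This is the cube of the identity ((2^m + (−1)^(m+1))^3/(27·2^(3m−1)) · (2^(1/3) − 1))^(1/3) = Σ_{k=−(3m−1)}^{0} (−2)^(k/3)/9^(1/3).) -/

import Mathlib

theorem geometric_series_cube_neg (m : ℕ) (hm : 0 < m) :
    (∑ j ∈ Finset.range (3 * m), (-1 : ℝ) ^ j * (2:ℝ) ^ (-(j : ℝ) / 3)) ^ 3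
      = ((2:ℝ) ^ m + (-1 : ℝ) ^ (m + 1)) ^ 3 * ((2:ℝ) ^ ((1:ℝ)/3) - 1)
        / (3 * (2:ℝ) ^ (3 * m - 1)) := by
  set a : ℝ := (2:ℝ) ^ ((1:ℝ)/3) with ha
  have ha0 : 0 < a := Real.rpow_pos_of_pos two_pos _
  have ha3 : a ^ 3 = 2 := by
    rw [ha, ← Real.rpow_natCast _ 3, ← Real.rpow_mul (by norm_num : (0:ℝ) ≤ 2)]
    norm_num
  have hainv : a⁻¹ = (2:ℝ) ^ (-(1:ℝ)/3) := by
    rw [ha, ← Real.rpow_neg (by norm_num : (0:ℝ) ≤ 2)]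
    norm_num
  have hsum : ∑ j ∈ Finset.range (3*m), (-1:ℝ)^j * (2:ℝ)^(-(j:ℝ)/3)
      = ∑ j ∈ Finset.range (3*m), (-(a⁻¹))^j := by
    refine Finset.sum_congr rfl fun j _ => ?_
    conv_rhs => rw [neg_pow]
    congr 1
    rw [hainv, ← Real.rpow_natCast ((2:ℝ)^(-(1:ℝ)/3)) j,
      ← Real.rpow_mul (by norm_num : (0:ℝ) ≤ 2)]
    congr 1
    ring
  have hq1 : (-(a⁻¹)) ≠ 1 := by
    have : 0 < a⁻¹ := inv_pos.mpr ha0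
    linarith
  rw [hsum, geom_sum_eq hq1]
  have hpow : (-(a⁻¹))^(3*m) = (-1:ℝ)^m / 2^m := by
    rw [pow_mul]
    have h3 : (-(a⁻¹))^3 = -(2:ℝ)⁻¹ := by
      rw [neg_pow, inv_pow, ha3]; norm_num
    rw [h3, neg_pow, div_eq_mul_inv, ← inv_pow]
  rw [hpow]
  have hb : (2:ℝ)^(3*m-1) * 2 = ((2:ℝ)^m)^3 := by
    rw [← pow_succ, ← pow_mul]
    congr 1
    omega
  have ha1 : (a+1)^3 * (a-1) = 3 := by linear_combination (a+2) * ha3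
  have hbpos : (0:ℝ) < 2^m := by positivity
  have hcpos : (0:ℝ) < 2^(3*m-1) := by positivity
  set ε : ℝ := (-1:ℝ)^m with hεdef
  rw [show ((-1:ℝ))^(m+1) = -ε by rw [pow_succ, hεdef]; ring]
  set b : ℝ := (2:ℝ)^m with hbdef
  set c : ℝ := (2:ℝ)^(3*m-1) with hcdef
  have hden : -(a⁻¹) - 1 ≠ 0 := by
    intro h
    have h1 : a⁻¹ = -1 := by linarith
    have h2 : (0:ℝ) < a⁻¹ := inv_pos.mpr ha0
    linarith
  have hS : (ε/b - 1)/(-(a⁻¹) - 1) = (b - ε) * a / (b * (1+a)) := by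
    rw [div_eq_div_iff hden (by positivity)]
    field_simp
    ring
  rw [hS, div_pow, div_eq_div_iff (by positivity) (by positivity)]
  linear_combination 3*c*(b-ε)^3 * ha3 + 3*(b-ε)^3 * hb - b^3*(b-ε)^3 * ha1
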